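/- In the prefix-routing model on a complete k-ary hierarchy of depth d, if every peer at leaf λ knows, for each level l ≤ d and each symbol c ≠ λ(l), some peer whose leaf name agrees with λ on the first l−1 symbols and has c as its l-th symbol (when such a peer exists), then for any target leaf μ containing at least one peer, greedy forwarding—at each step forwarding to a known peer whose leaf name shares a strictly longer common prefix with μ—reaches a peer in μ in at most d hops. -/
import Mathlib


open Classical in
/-- The common prefix length of a leaf name `lam` with the target leaf `mu`:
the largest `l ≤ d` such that `lam` and `mu` agree on all positions `i < l`. -/
noncomputable def cpl {k d : ℕ} (mu lam : Fin d → Fin k) : ℕ :=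
  Nat.findGreatest (fun l => ∀ i : Fin d, (i : ℕ) < l → lam i = mu i) d

/-- `ReachN step n p q`: `q` is reachable from `p` in exactly `n` forwarding
hops of the relation `step`. -/
inductive ReachN {P : Type*} (step : P → P → Prop) : ℕ → P → P → Prop
  | refl (p : P) : ReachN step 0 p p
  | tail {n : ℕ} {p q r : P} : ReachN step n p q → step q r → ReachN step (n + 1) p r

theorem cpl_le {k d : ℕ} (mu lam : Fin d → Fin k) : cpl mu lam ≤ d :=
  Nat.findGreatest_le d

theorem cpl_self {k d : ℕ} (mu : Fin d → Fin k) : cpl mu mu = d :=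
  Nat.le_antisymm (cpl_le mu mu)
    (Nat.le_findGreatest le_rfl (fun _ _ => rfl))

theorem eq_of_cpl_eq {k d : ℕ} {mu lam : Fin d → Fin k} (h : cpl mu lam = d) :
    lam = mu := by
  funext i
  have := Nat.findGreatest_spec (P := fun l => ∀ i : Fin d, (i : ℕ) < l → lam i = mu i)
    (m := 0) (n := d) (Nat.zero_le d) (fun j hj => absurd hj (Nat.not_lt_zero _))
  rw [show Nat.findGreatest (fun l => ∀ i : Fin d, (i : ℕ) < l → lam i = mu i) d = cpl mu lam
    from rfl, h] at this
  exact this i i.isLt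

theorem ReachN.head {P : Type*} {step : P → P → Prop} {n : ℕ} {p q r : P}
    (h : ReachN step n q r) (hs : step p q) : ReachN step (n + 1) p r := by
  induction h with
  | refl => exact .tail (.refl p) hs
  | tail h h2 ih => exact .tail (ih hs) h2

/-- In the prefix-routing model on a complete k-ary hierarchy of
depth `d`, suppose that from any peer whose leaf name shares a common prefix of
length `< d` with the target leaf `mu`, whenever some peer with a strictly
longer common prefix exists, a one-hop forwarding to a known peer with a
strictly longer common prefix is possible; and suppose the target leaf `mu` is
occupied. Then greedy forwarding from any peer reaches a peer located at `mu`
in at most `d` hops. -/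
theorem stmt14 {k d : ℕ} (Peer : Type*) (loc : Peer → (Fin d → Fin k))
    (mu : Fin d → Fin k) (step : Peer → Peer → Prop)
    (hstep : ∀ p : Peer, cpl mu (loc p) < d →
      (∃ q : Peer, cpl mu (loc p) + 1 ≤ cpl mu (loc q)) →
      ∃ p' : Peer, step p p' ∧ cpl mu (loc p) + 1 ≤ cpl mu (loc p'))
    (htarget : ∃ q : Peer, loc q = mu) :
    ∀ p₀ : Peer, ∃ n ≤ d, ∃ p : Peer, ReachN step n p₀ p ∧ loc p = mu := by
  obtain ⟨t, ht⟩ := htarget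
  suffices h : ∀ m : ℕ, ∀ p₀ : Peer, d - cpl mu (loc p₀) ≤ m →
      ∃ n ≤ m, ∃ p : Peer, ReachN step n p₀ p ∧ loc p = mu by
    intro p₀; exact h d p₀ (Nat.sub_le _ _)
  intro m
  induction m with
  | zero =>
    intro p₀ h0
    have : cpl mu (loc p₀) = d := Nat.le_antisymm (cpl_le _ _) (by omega)
    exact ⟨0, le_rfl, p₀, .refl p₀, eq_of_cpl_eq this⟩
  | succ m ih =>
    intro p₀ h0
    rcases Nat.lt_or_ge (cpl mu (loc p₀)) d with hlt | hge
    · obtain ⟨p', hs, hcpl⟩ := hstep p₀ hlt ⟨t, by rw [ht, cpl_self]; omega⟩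
      obtain ⟨n, hn, p, hr, hp⟩ := ih p' (by omega)
      exact ⟨n + 1, by omega, p, hr.head hs, hp⟩
    · have : cpl mu (loc p₀) = d := Nat.le_antisymm (cpl_le _ _) hge
      exact ⟨0, Nat.zero_le _, p₀, .refl p₀, eq_of_cpl_eq this⟩
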